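/- Let n be a positive integer, p ≥ 0 a real number, x a real number, and v a nonnegative integer. If Y ~ Poisson(np), then E[h_{v,x}(Y)] = (p − x)^v. -/

import Mathlib

open scoped BigOperators

/-- The Poisson probability mass function with mean `μ`: `Pr(Y = t) = e^{-μ} μ^t / t!`. -/
noncomputable def poissonPMF (μ : ℝ) (t : ℕ) : ℝ := Real.exp (-μ) * μ ^ t / t.factorial

/-- `h_{v,x}(y) = Σ_{l=0}^{v} binom(v,l) (-x)^{v-l} Π_{l'=0}^{l-1} ((y - l')/n)`. -/
noncomputable def hfun (n : ℕ) (x : ℝ) (v : ℕ) (y : ℝ) : ℝ :=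
  ∑ l ∈ Finset.range (v + 1), (v.choose l : ℝ) * (-x) ^ (v - l) *
    ∏ l' ∈ Finset.range l, ((y - l') / n)

lemma prod_sub_cast (t l : ℕ) :
    ∏ i ∈ Finset.range l, ((t : ℝ) - i) = (t.descFactorial l : ℝ) := by
  induction l with
  | zero => simp
  | succ l ih =>
    rw [Finset.prod_range_succ, ih, Nat.descFactorial_succ]
    rcases le_or_gt l t with h | h
    · rw [Nat.cast_mul, Nat.cast_sub h]; ring
    · simp [Nat.descFactorial_eq_zero_iff_lt.2 h]

lemma shift_inj (l : ℕ) : Function.Injective (fun s : ℕ => s + l) :=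
  fun a b h => by simpa using h

lemma poisson_descFactorial_shift (μ : ℝ) (l s : ℕ) :
    Real.exp (-μ) * μ ^ (s + l) / (s + l).factorial * ((s + l).descFactorial l : ℝ)
      = Real.exp (-μ) * μ ^ l * (μ ^ s / s.factorial) := by
  have key : (s.factorial : ℝ) * ((s + l).descFactorial l : ℝ) = ((s + l).factorial : ℝ) := by
    have := Nat.factorial_mul_descFactorial (Nat.le_add_left l s)
    rw [Nat.add_sub_cancel] at this
    exact_mod_cast this
  have h1 : ((s + l).factorial : ℝ) ≠ 0 := Nat.cast_ne_zero.2 (Nat.factorial_ne_zero _)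
  have h2 : (s.factorial : ℝ) ≠ 0 := Nat.cast_ne_zero.2 (Nat.factorial_ne_zero _)
  field_simp
  rw [pow_add, ← key]
  ring

lemma support_subset (μ : ℝ) (l : ℕ) :
    Function.support (fun t : ℕ => Real.exp (-μ) * μ ^ t / t.factorial * (t.descFactorial l : ℝ))
      ⊆ Set.range (fun s : ℕ => s + l) := by
  intro t ht
  rcases le_or_gt l t with h | h
  · exact ⟨t - l, by simpa using Nat.sub_add_cancel h⟩
  · exfalso; apply ht
    simp [Nat.descFactorial_eq_zero_iff_lt.2 h]

lemma summable_aux (μ : ℝ) (l : ℕ) :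
    Summable (fun t : ℕ => Real.exp (-μ) * μ ^ t / t.factorial * (t.descFactorial l : ℝ)) := by
  rw [← Function.Injective.summable_iff (shift_inj l)
      (fun x hx => Function.notMem_support.1 fun hs => hx (support_subset μ l hs))]
  have : (fun t : ℕ => Real.exp (-μ) * μ ^ t / t.factorial * (t.descFactorial l : ℝ))
      ∘ (fun s : ℕ => s + l)
      = fun s : ℕ => Real.exp (-μ) * μ ^ l * (μ ^ s / s.factorial) := by
    funext s; exact poisson_descFactorial_shift μ l s
  rw [this]
  exact (Real.summable_pow_div_factorial μ).mul_left _

lemma tsum_poisson_descFactorial (μ : ℝ) (l : ℕ) :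
    ∑' t : ℕ, Real.exp (-μ) * μ ^ t / t.factorial * (t.descFactorial l : ℝ) = μ ^ l := by
  rw [← Function.Injective.tsum_eq (shift_inj l) (support_subset μ l)]
  have : ∀ s : ℕ,
      Real.exp (-μ) * μ ^ (s + l) / (s + l).factorial * ((s + l).descFactorial l : ℝ)
        = Real.exp (-μ) * μ ^ l * (μ ^ s / s.factorial) :=
    poisson_descFactorial_shift μ l
  rw [tsum_congr this, tsum_mul_left]
  have hexp : ∑' s : ℕ, μ ^ s / (s.factorial : ℝ) = Real.exp μ := by
    rw [Real.exp_eq_exp_ℝ, NormedSpace.exp_eq_tsum_div]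
  rw [hexp, Real.exp_neg]
  field_simp

/-- If `Y ~ Poisson(np)`, then `E[h_{v,x}(Y)] = (p - x)^v`. -/
theorem expectation_hfun_eq (n : ℕ) (hn : 0 < n) (p : ℝ) (hp : 0 ≤ p) (x : ℝ) (v : ℕ) :
    ∑' t : ℕ, poissonPMF (n * p) t * hfun n x v (t : ℝ) = (p - x) ^ v := by
  have hn' : (n : ℝ) ≠ 0 := Nat.cast_ne_zero.2 hn.ne'
  set μ : ℝ := (n : ℝ) * p with hμ
  have hstep : ∀ t : ℕ, poissonPMF μ t * hfun n x v (t : ℝ) =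
      ∑ l ∈ Finset.range (v + 1), (v.choose l : ℝ) * (-x) ^ (v - l) / (n : ℝ) ^ l *
        (Real.exp (-μ) * μ ^ t / t.factorial * (t.descFactorial l : ℝ)) := by
    intro t
    rw [hfun, Finset.mul_sum]
    refine Finset.sum_congr rfl fun l _ => ?_
    rw [Finset.prod_div_distrib, Finset.prod_const, Finset.card_range, prod_sub_cast, poissonPMF]
    ring
  rw [tsum_congr hstep,
    Summable.tsum_finsetSum (fun l _ => (summable_aux μ l).mul_left _)]
  have hterm : ∀ l ∈ Finset.range (v + 1),
      (∑' t : ℕ, (v.choose l : ℝ) * (-x) ^ (v - l) / (n : ℝ) ^ l *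
        (Real.exp (-μ) * μ ^ t / t.factorial * (t.descFactorial l : ℝ)))
        = p ^ l * (-x) ^ (v - l) * (v.choose l : ℝ) := by
    intro l _
    rw [tsum_mul_left, tsum_poisson_descFactorial, hμ, mul_pow]
    field_simp
  rw [Finset.sum_congr rfl hterm, ← add_pow, ← sub_eq_add_neg]
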